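/- Let Z ∈ M_d(ℂ) be a non-normal matrix, i.e. Z Z† ≠ Z† Z. Define the matrix Q(Z) indexed by Fin d × Fin 2 as the block matrix Q(Z) = I ⊗ E₁₁ + Z ⊗ E₁₂ + Z† ⊗ E₂₁ + (Z†Z) ⊗ E₂₂, i.e. with block form [[I, Z],[Z†, Z†Z]] with respect to the second (two-dimensional) factor. Then Q(Z) is positive semidefinite but NOT separable with respect to the bipartition ℂ^d ⊗ ℂ². -/

import Mathlib

open Matrix Kronecker
open scoped ComplexOrder

set_option linter.unusedSectionVars false
set_option maxHeartbeats 1000000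

/-- A bipartite matrix on `ℂ^{d₁} ⊗ ℂ^{d₂}` is separable if it is a finite sum of
Kronecker products of positive semidefinite matrices. -/
def MatSep {d₁ d₂ : ℕ} (ρ : Matrix (Fin d₁ × Fin d₂) (Fin d₁ × Fin d₂) ℂ) : Prop :=
  ∃ (k : ℕ) (A : Fin k → Matrix (Fin d₁) (Fin d₁) ℂ) (B : Fin k → Matrix (Fin d₂) (Fin d₂) ℂ),
    (∀ i, (A i).PosSemidef) ∧ (∀ i, (B i).PosSemidef) ∧ ρ = ∑ i, A i ⊗ₖ B i

/-- The block matrix `Q(Z) = [[I, Z], [Z†, Z†Z]]` on `ℂ^d ⊗ ℂ²`. -/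
noncomputable def Qmat {d : ℕ} (Z : Matrix (Fin d) (Fin d) ℂ) :
    Matrix (Fin d × Fin 2) (Fin d × Fin 2) ℂ :=
  (1 : Matrix (Fin d) (Fin d) ℂ) ⊗ₖ Matrix.single (0 : Fin 2) (0 : Fin 2) (1 : ℂ)
    + Z ⊗ₖ Matrix.single (0 : Fin 2) (1 : Fin 2) (1 : ℂ)
    + Zᴴ ⊗ₖ Matrix.single (1 : Fin 2) (0 : Fin 2) (1 : ℂ)
    + (Zᴴ * Z) ⊗ₖ Matrix.single (1 : Fin 2) (1 : Fin 2) (1 : ℂ)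

/-! ### Auxiliary lemmas -/

lemma kron_conjT {m n : Type*} [Fintype m] [Fintype n]
    (A : Matrix m m ℂ) (B : Matrix n n ℂ) : (A ⊗ₖ B)ᴴ = Aᴴ ⊗ₖ Bᴴ := by
  ext ⟨i, a⟩ ⟨j, b⟩
  simp [conjTranspose_apply, kroneckerMap_apply, star_mul']

lemma kron_psd {m n : Type*} [Fintype m] [Fintype n] [DecidableEq m] [DecidableEq n]
    {A : Matrix m m ℂ} {B : Matrix n n ℂ}
    (hA : A.PosSemidef) (hB : B.PosSemidef) : (A ⊗ₖ B).PosSemidef := by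
  exact hA.kronecker hB

lemma trace_psd_nonneg {m n : Type*} [Fintype m] [Fintype n]
    (X : Matrix m n ℂ) : 0 ≤ (Xᴴ * X).trace := by
  rw [Matrix.trace]
  refine Finset.sum_nonneg fun j _ => ?_
  rw [Matrix.diag_apply, Matrix.mul_apply]
  exact Finset.sum_nonneg fun i _ => by
    simpa [conjTranspose_apply] using star_mul_self_nonneg (X i j)

lemma eq_zero_of_trace_psd {m n : Type*} [Fintype m] [Fintype n]
    (X : Matrix m n ℂ) (h : (Xᴴ * X).trace = 0) : X = 0 := by
  have h' : ∑ j : n, ∑ i : m, star (X i j) * X i j = 0 := by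
    simpa [Matrix.trace, Matrix.diag_apply, Matrix.mul_apply, conjTranspose_apply] using h
  ext i j
  have h1 := (Finset.sum_eq_zero_iff_of_nonneg (fun j _ =>
    Finset.sum_nonneg fun i _ => star_mul_self_nonneg (X i j))).mp h' j (Finset.mem_univ j)
  have h2 := (Finset.sum_eq_zero_iff_of_nonneg (fun i _ =>
    star_mul_self_nonneg (X i j))).mp h1 i (Finset.mem_univ i)
  rcases mul_eq_zero.mp h2 with h3 | h3
  · simpa using star_eq_zero.mp h3
  · simpa using h3

lemma sum_mulVec' {m n ι : Type*} [Fintype m] [Fintype n] (s : Finset ι)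
    (M : ι → Matrix m n ℂ) (v : n → ℂ) :
    (∑ i ∈ s, M i) *ᵥ v = ∑ i ∈ s, M i *ᵥ v := by
  ext p
  simp only [mulVec, dotProduct, Matrix.sum_apply, Finset.sum_apply, Finset.sum_mul]
  exact Finset.sum_comm

lemma dotProduct_sum' {n ι : Type*} [Fintype n] (s : Finset ι)
    (v : n → ℂ) (w : ι → n → ℂ) :
    v ⬝ᵥ (∑ i ∈ s, w i) = ∑ i ∈ s, v ⬝ᵥ w i := by
  simp only [dotProduct, Finset.sum_apply, Finset.mul_sum]
  exact Finset.sum_comm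

open scoped MatrixOrder in
/-- The key algebraic lemma: if `1 = ∑ Pᵢ` with `Pᵢ` PSD, `Pᵢ Z = μᵢ Pᵢ` and
`Zᴴ Z = ∑ |μᵢ|² Pᵢ`, then `Z` is normal. -/
lemma key {d k : ℕ} (Z : Matrix (Fin d) (Fin d) ℂ)
    (P : Fin k → Matrix (Fin d) (Fin d) ℂ) (μ : Fin k → ℂ)
    (hP : ∀ i, (P i).PosSemidef)
    (hsum : ∑ i, P i = 1)
    (hPZ : ∀ i, P i * Z = μ i • P i)
    (hZ4 : Zᴴ * Z = ∑ i, (star (μ i) * μ i) • P i) :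
    Z * Zᴴ = Zᴴ * Z := by
  have hPH : ∀ i, (P i)ᴴ = P i := fun i => (hP i).1
  have hZPadj : ∀ i, Zᴴ * P i = star (μ i) • P i := by
    intro i
    calc Zᴴ * P i = (P i * Z)ᴴ := by rw [conjTranspose_mul, hPH]
    _ = (μ i • P i)ᴴ := by rw [hPZ i]
    _ = star (μ i) • P i := by rw [conjTranspose_smul, hPH]
  have hZeq : Z = ∑ i, μ i • P i := by
    calc Z = (∑ i, P i) * Z := by rw [hsum, one_mul]
    _ = ∑ i, P i * Z := Finset.sum_mul _ _ _
    _ = ∑ i, μ i • P i := by simp_rw [hPZ]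
  set S : Fin k → Matrix (Fin d) (Fin d) ℂ := fun i => CFC.sqrt (P i) with hS
  have hSS : ∀ i, S i * S i = P i := fun i => CFC.sqrt_mul_sqrt_self (P i) (hP i).nonneg
  have hSH : ∀ i, (S i)ᴴ = S i := fun i => (CFC.sqrt_nonneg (P i)).posSemidef.1
  set W : Fin k → Matrix (Fin d) (Fin d) ℂ := fun i => Z - μ i • 1 with hW
  have htr : ∀ i, ((W i * S i)ᴴ * (W i * S i)).trace
      = (Zᴴ * Z * P i).trace - (star (μ i) * μ i) * (P i).trace := by
    intro i
    have e1 : (W i * S i)ᴴ * (W i * S i) = S i * ((W i)ᴴ * W i) * S i := by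
      rw [conjTranspose_mul, hSH]; simp only [Matrix.mul_assoc]
    rw [e1]
    have e2 : (S i * ((W i)ᴴ * W i) * S i).trace = ((W i)ᴴ * W i * P i).trace := by
      rw [trace_mul_cycle, ← Matrix.mul_assoc, Matrix.mul_assoc, hSS, trace_mul_comm]
    rw [e2]
    have e3 : (W i)ᴴ * W i
        = Zᴴ * Z - μ i • Zᴴ - star (μ i) • Z + (star (μ i) * μ i) • 1 := by
      simp only [hW, conjTranspose_sub, conjTranspose_smul, conjTranspose_one]
      rw [Matrix.sub_mul, Matrix.mul_sub, Matrix.mul_sub]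
      simp [Matrix.mul_smul, Matrix.smul_mul, smul_smul, mul_comm]
      abel
    rw [e3]
    have trZP : (Z * P i).trace = μ i * (P i).trace := by
      rw [trace_mul_comm, hPZ i, trace_smul, smul_eq_mul]
    have trZhP : (Zᴴ * P i).trace = star (μ i) * (P i).trace := by
      rw [hZPadj i, trace_smul, smul_eq_mul]
    rw [Matrix.add_mul, Matrix.sub_mul, Matrix.sub_mul]
    rw [trace_add, trace_sub, trace_sub, Matrix.smul_mul, Matrix.smul_mul, Matrix.smul_mul,
      trace_smul, trace_smul, trace_smul, one_mul, trace_mul_comm (Zᴴ) (P i)] at *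
    rw [trZhP]
    rw [trace_mul_comm Z (P i)] at trZP
    rw [trace_mul_comm (Zᴴ * Z) (P i)]
    rw [trace_mul_comm (P i) Z] at trZP
    rw [trZP]
    simp [smul_eq_mul]
    ring
  have hsum0 : ∑ i, ((W i * S i)ᴴ * (W i * S i)).trace = 0 := by
    have h1 : ∑ i, (Zᴴ * Z * P i).trace = (Zᴴ * Z).trace := by
      rw [← trace_sum, ← Finset.mul_sum, hsum, Matrix.mul_one]
    have h2 : (Zᴴ * Z).trace = ∑ i, (star (μ i) * μ i) * (P i).trace := by
      rw [hZ4, trace_sum]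
      simp [trace_smul, smul_eq_mul]
    simp_rw [htr]
    rw [Finset.sum_sub_distrib, h1, h2]
    ring
  have hz : ∀ i, W i * S i = 0 := by
    intro i
    apply eq_zero_of_trace_psd
    refine (Finset.sum_eq_zero_iff_of_nonneg (fun i _ => trace_psd_nonneg (W i * S i))).mp
      hsum0 i (Finset.mem_univ i)
  have hZP : ∀ i, Z * P i = μ i • P i := by
    intro i
    have h0 : W i * P i = 0 := by
      rw [← hSS i, ← Matrix.mul_assoc, hz i, Matrix.zero_mul]
    have h' : Z * P i - μ i • P i = 0 := by
      simpa [hW, Matrix.sub_mul, Matrix.smul_mul] using h0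
    linear_combination (norm := noncomm_ring) h'
  have hZh : Zᴴ = ∑ i, star (μ i) • P i := by
    rw [hZeq]
    simp [conjTranspose_sum, conjTranspose_smul, hPH]
  calc Z * Zᴴ = ∑ i, star (μ i) • (Z * P i) := by
        rw [hZh, Finset.mul_sum]; simp [Matrix.mul_smul]
  _ = ∑ i, (star (μ i) * μ i) • P i := by
        simp_rw [hZP, smul_smul]
  _ = Zᴴ * Z := hZ4.symm

/-- `Qmat Z = Nᴴ N` for `N = [[1, Z],[0,0]]`. -/
noncomputable def Nmat {d : ℕ} (Z : Matrix (Fin d) (Fin d) ℂ) :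
    Matrix (Fin d × Fin 2) (Fin d × Fin 2) ℂ :=
  (1 : Matrix (Fin d) (Fin d) ℂ) ⊗ₖ Matrix.single (0 : Fin 2) (0 : Fin 2) (1 : ℂ)
    + Z ⊗ₖ Matrix.single (0 : Fin 2) (1 : Fin 2) (1 : ℂ)

lemma stdBM_conjT (a b : Fin 2) :
    (Matrix.single a b (1 : ℂ))ᴴ = Matrix.single b a (1 : ℂ) := by
  ext i j
  simp [conjTranspose_apply, Matrix.single_apply, and_comm]

lemma qmat_eq_conj {d : ℕ} (Z : Matrix (Fin d) (Fin d) ℂ) :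
    Qmat Z = (Nmat Z)ᴴ * Nmat Z := by
  rw [Nmat, conjTranspose_add, kron_conjT, kron_conjT, stdBM_conjT, stdBM_conjT,
    conjTranspose_one]
  rw [Matrix.add_mul, Matrix.mul_add, Matrix.mul_add]
  rw [← mul_kronecker_mul, ← mul_kronecker_mul, ← mul_kronecker_mul, ← mul_kronecker_mul]
  simp only [Matrix.one_mul, Matrix.mul_one, single_mul_single_same, one_mul]
  rw [Qmat]
  abel

/-- The kernel vectors `(-Z y, y)` of `Qmat Z`. -/
noncomputable def kerVec {d : ℕ} (Z : Matrix (Fin d) (Fin d) ℂ) (y : Fin d → ℂ) :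
    Fin d × Fin 2 → ℂ :=
  fun p => if p.2 = 0 then -(Z *ᵥ y) p.1 else y p.1

lemma Nmat_kerVec {d : ℕ} (Z : Matrix (Fin d) (Fin d) ℂ) (y : Fin d → ℂ) :
    Nmat Z *ᵥ kerVec Z y = 0 := by
  ext ⟨r, a⟩
  fin_cases a <;>
  · simp only [Nmat, kerVec, mulVec, dotProduct, Fintype.sum_prod_type, Fin.sum_univ_two,
      Matrix.add_apply, kroneckerMap_apply, Matrix.single_apply, Matrix.of_apply,
      Matrix.one_apply, Pi.zero_apply]
    norm_num [Finset.sum_add_distrib, Finset.sum_ite_eq' (Finset.univ : Finset (Fin d))]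
    try rw [← Finset.sum_neg_distrib]
    try simp [mulVec, dotProduct, add_comm]

lemma kron_mulVec_kerVec {d : ℕ} (Z : Matrix (Fin d) (Fin d) ℂ)
    (A : Matrix (Fin d) (Fin d) ℂ) (B : Matrix (Fin 2) (Fin 2) ℂ)
    (y : Fin d → ℂ) (r : Fin d) (a : Fin 2) :
    ((A ⊗ₖ B) *ᵥ kerVec Z y) (r, a)
      = - (B a 0 * (A *ᵥ (Z *ᵥ y)) r) + B a 1 * (A *ᵥ y) r := by
  simp only [kerVec, mulVec, dotProduct, Fintype.sum_prod_type, Fin.sum_univ_two,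
    kroneckerMap_apply]
  norm_num [Finset.mul_sum, Finset.sum_add_distrib, ← Finset.sum_neg_distrib]
  congr 1
  · apply Finset.sum_congr rfl; intros
    apply Finset.sum_congr rfl; intros; ring
  · apply Finset.sum_congr rfl; intros; ring

section extraction

variable {d k : ℕ} (Z : Matrix (Fin d) (Fin d) ℂ)
  (A : Fin k → Matrix (Fin d) (Fin d) ℂ) (B : Fin k → Matrix (Fin 2) (Fin 2) ℂ)
  (hsum : Qmat Z = ∑ i, A i ⊗ₖ B i)

include hsum

lemma E00 : ∑ i, (B i 0 0) • A i = 1 := by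
  ext r s
  have h := congrFun (congrFun hsum ((r, 0) : Fin d × Fin 2)) ((s, 0) : Fin d × Fin 2)
  simp only [Qmat, Matrix.add_apply, kroneckerMap_apply, Matrix.sum_apply,
    Matrix.single_apply, Matrix.of_apply] at h
  norm_num at h
  simpa [Matrix.sum_apply, smul_eq_mul, mul_comm] using h.symm

lemma E11 : ∑ i, (B i 1 1) • A i = Zᴴ * Z := by
  ext r s
  have h := congrFun (congrFun hsum ((r, 1) : Fin d × Fin 2)) ((s, 1) : Fin d × Fin 2)
  simp only [Qmat, Matrix.add_apply, kroneckerMap_apply, Matrix.sum_apply,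
    Matrix.single_apply, Matrix.of_apply] at h
  norm_num at h
  simpa [Matrix.sum_apply, smul_eq_mul, mul_comm] using h.symm

end extraction

/-! ### The main theorem -/

theorem stmt_2 (d : ℕ) (Z : Matrix (Fin d) (Fin d) ℂ) (hZ : Z * Zᴴ ≠ Zᴴ * Z) :
    (Qmat Z).PosSemidef ∧ ¬ MatSep (Qmat Z) := by
  have hpsd : (Qmat Z).PosSemidef := by
    rw [qmat_eq_conj]
    exact posSemidef_conjTranspose_mul_self _
  refine ⟨hpsd, ?_⟩
  rintro ⟨k, A, B, hA, hB, hsum⟩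
  -- each Kronecker factor kills the kernel vectors
  have hterm : ∀ (y : Fin d → ℂ) (i : Fin k), (A i ⊗ₖ B i) *ᵥ kerVec Z y = 0 := by
    intro y i
    have hQv : Qmat Z *ᵥ kerVec Z y = 0 := by
      rw [qmat_eq_conj, ← Matrix.mulVec_mulVec, Nmat_kerVec, mulVec_zero]
    have htot : ∑ j, star (kerVec Z y) ⬝ᵥ ((A j ⊗ₖ B j) *ᵥ kerVec Z y) = 0 := by
      rw [← dotProduct_sum', ← sum_mulVec', ← hsum, hQv, dotProduct_zero]
    have hj := (Finset.sum_eq_zero_iff_of_nonneg (fun j _ =>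
      (kron_psd (hA j) (hB j)).dotProduct_mulVec_nonneg (kerVec Z y))).mp htot i (Finset.mem_univ i)
    exact ((kron_psd (hA i) (hB i)).dotProduct_mulVec_zero_iff _).mp hj
  -- the structural relations
  have hrel : ∀ (i : Fin k) (a : Fin 2), (B i a 0) • (A i * Z) = (B i a 1) • A i := by
    intro i a
    ext r s
    have h := congrFun (hterm (Pi.single s 1) i) (r, a)
    rw [kron_mulVec_kerVec] at h
    have h1 : (A i *ᵥ (Z *ᵥ Pi.single s (1:ℂ))) r = (A i * Z) r s := by
      rw [Matrix.mulVec_mulVec]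
      simp [Matrix.mulVec_single]
    have h2 : (A i *ᵥ Pi.single s (1:ℂ)) r = A i r s := by
      simp [Matrix.mulVec_single]
    rw [h1, h2] at h
    simp only [Pi.zero_apply] at h
    simp only [Matrix.smul_apply, smul_eq_mul]
    linear_combination -h
  -- scalar facts
  have hBH : ∀ i, (B i)ᴴ = B i := fun i => (hB i).1
  have hB10 : ∀ i, B i 1 0 = star (B i 0 1) := by
    intro i
    conv_lhs => rw [← hBH i]
    rfl
  have ha_star : ∀ i, star (B i 0 0) = B i 0 0 := by
    intro i
    conv_rhs => rw [← hBH i]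
    rfl
  have ha_nonneg : ∀ i, 0 ≤ B i 0 0 := by
    intro i
    have := (hB i).dotProduct_mulVec_nonneg (Pi.single 0 1)
    simpa [Matrix.mulVec_single, dotProduct, Pi.single_apply] using this
  have hb_of_a : ∀ i, B i 0 0 = 0 → B i 0 1 = 0 := by
    intro i h
    have h0 : star (Pi.single (0 : Fin 2) (1:ℂ)) ⬝ᵥ B i *ᵥ Pi.single 0 1 = 0 := by
      simpa [Matrix.mulVec_single, dotProduct, Pi.single_apply] using h
    have h1 := ((hB i).dotProduct_mulVec_zero_iff _).mp h0
    have h2 : B i 1 0 = 0 := by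
      have := congrFun h1 1
      simpa [Matrix.mulVec_single] using this
    rw [hB10 i] at h2
    simpa using congrArg star h2
  -- define P and μ
  set P : Fin k → Matrix (Fin d) (Fin d) ℂ := fun i => B i 0 0 • A i with hPdef
  set μ : Fin k → ℂ := fun i => if B i 0 0 = 0 then 0 else B i 0 1 / B i 0 0 with hμdef
  have hPpsd : ∀ i, (P i).PosSemidef := by
    intro i
    refine Matrix.PosSemidef.of_dotProduct_mulVec_nonneg ?_ ?_
    · show (B i 0 0 • A i)ᴴ = B i 0 0 • A i
      rw [conjTranspose_smul, (hA i).1, ha_star i]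
    · intro x
      show 0 ≤ star x ⬝ᵥ (B i 0 0 • A i) *ᵥ x
      rw [smul_mulVec, dotProduct_smul, smul_eq_mul]
      exact mul_nonneg (ha_nonneg i) ((hA i).dotProduct_mulVec_nonneg x)
  have hPsum : ∑ i, P i = 1 := E00 Z A B hsum
  have hPZ : ∀ i, P i * Z = μ i • P i := by
    intro i
    by_cases h : B i 0 0 = 0
    · show (B i 0 0 • A i) * Z = μ i • (B i 0 0 • A i)
      rw [h, zero_smul, Matrix.zero_mul, smul_zero]
    · show (B i 0 0 • A i) * Z = μ i • (B i 0 0 • A i)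
      rw [Matrix.smul_mul, hrel i 0, hμdef]
      simp only [if_neg h, smul_smul]
      rw [div_mul_cancel₀ _ h]
  have hZ4 : Zᴴ * Z = ∑ i, (star (μ i) * μ i) • P i := by
    rw [← E11 Z A B hsum]
    refine Finset.sum_congr rfl fun i _ => ?_
    by_cases h : B i 0 0 = 0
    · have hb := hb_of_a i h
      have h10 : B i 1 0 = 0 := by rw [hB10 i, hb, star_zero]
      have h11 : (B i 1 1) • A i = 0 := by
        rw [← hrel i 1, h10, zero_smul]
      rw [h11, hμdef]
      simp [h]
    · have hc : B i 0 0 • (B i 1 1 • A i) = (star (B i 0 1) * B i 0 1) • A i := by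
        rw [← hrel i 1, hB10 i]
        rw [smul_comm, hrel i 0, smul_smul]
      have hcoef : B i 1 1 • A i
          = ((B i 0 0)⁻¹ * (star (B i 0 1) * B i 0 1)) • A i := by
        calc B i 1 1 • A i = ((B i 0 0)⁻¹ * B i 0 0) • (B i 1 1 • A i) := by
              rw [inv_mul_cancel₀ h, one_smul]
        _ = (B i 0 0)⁻¹ • (B i 0 0 • (B i 1 1 • A i)) := by rw [mul_smul]
        _ = (B i 0 0)⁻¹ • ((star (B i 0 1) * B i 0 1) • A i) := by rw [hc]
        _ = ((B i 0 0)⁻¹ * (star (B i 0 1) * B i 0 1)) • A i := by rw [smul_smul]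
      rw [hcoef, hPdef]
      simp only [hμdef, if_neg h, smul_smul]
      congr 1
      rw [star_div₀, ha_star i]
      field_simp
  have := key Z P μ hPpsd hPsum hPZ hZ4
  exact hZ this
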